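/- arXiv:2006.12193 — 2 statements merged into one kernel-verified Lean document; each statement's English description precedes it below -/
import Mathlib

section
/- Let $G(x) = \sum_{i \ge 1} a_i x^i \in \widehat{\mathbb{Q}}[[x]]$ (with $\widehat{\mathbb{Q}} = \widehat{\mathbb{Z}} \otimes \mathbb{Q}$) such that $(\partial G)(x,y) = G(x+y-xy) - G(x) - G(y)$ has all coefficients in $\widehat{\mathbb{Z}}$. Set $b_i = i a_i$. Then $b_i - b_1 \in \widehat{\mathbb{Z}}$ for all $i \ge 1$. In particular, if $a_1 \in \widehat{\mathbb{Z}}$ then all $b_i \in \widehat{\mathbb{Z}}$. -/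
set_option maxHeartbeats 1000000
set_option synthInstance.maxHeartbeats 200000

open TensorProduct

/-- The ring of profinite integers `Ẑ = lim ℤ/nℤ`, realized as the subring of
`∀ n : ℕ+, ZMod n` consisting of compatible families. -/
def ZHatSubring : Subring (∀ n : ℕ+, ZMod n) where
  carrier := {f | ∀ (d n : ℕ+) (h : (d : ℕ) ∣ (n : ℕ)), ZMod.castHom h (ZMod d) (f n) = f d}
  zero_mem' := by intro d n h; simp
  one_mem' := by intro d n h; simp only [Pi.one_apply, map_one]
  add_mem' := by intro a b ha hb d n h; simp [map_add, ha d n h, hb d n h]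
  mul_mem' := by intro a b ha hb d n h; simp [map_mul, ha d n h, hb d n h]
  neg_mem' := by intro a ha d n h; simp [map_neg, ha d n h]

/-- Profinite integers. -/
abbrev ZHat : Type := ZHatSubring

/-- `Q̂ = Ẑ ⊗ ℚ`. -/
abbrev QHat : Type := ℚ ⊗[ℤ] ZHat

/-- The canonical embedding `Ẑ → Q̂`. -/
noncomputable def toQHat : ZHat →+* QHat := Algebra.TensorProduct.includeRight.toRingHom

/-- Substitution of a multivariate power series with vanishing constant term into a
one-variable power series. -/
noncomputable def psubst {K : Type*} [CommRing K] {σ : Type*}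
    (f : MvPowerSeries σ K) (G : PowerSeries K) : MvPowerSeries σ K :=
  fun d => ∑ n ∈ Finset.range ((d.sum fun _ e => e) + 1),
    PowerSeries.coeff n G * MvPowerSeries.coeff d (f ^ n)

/-- The partial derivative `∂G(x,y) = G(x+y-xy) - G(x) - G(y) + G(0)` with respect to the
multiplicative formal group law. -/
noncomputable def deriv2 {K : Type*} [CommRing K] (G : PowerSeries K) :
    MvPowerSeries (Fin 2) K :=
  psubst (MvPowerSeries.X 0 + MvPowerSeries.X 1 - MvPowerSeries.X 0 * MvPowerSeries.X 1) G
    - psubst (MvPowerSeries.X 0) G - psubst (MvPowerSeries.X 1) G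
    + MvPowerSeries.C (σ := Fin 2) (R := K) (PowerSeries.constantCoeff G)

noncomputable section AuxFml

open MvPowerSeries

variable (K : Type*) [CommRing K]

/-- The multiplicative formal group law `x + y - xy`. -/
def fml : MvPowerSeries (Fin 2) K :=
  MvPowerSeries.X 0 + MvPowerSeries.X 1 - MvPowerSeries.X 0 * MvPowerSeries.X 1

variable {K}

lemma coeff_X_mul' (s : Fin 2) (m : Fin 2 →₀ ℕ) (g : MvPowerSeries (Fin 2) K) :
    MvPowerSeries.coeff m (MvPowerSeries.X s * g) =
      if Finsupp.single s 1 ≤ m then MvPowerSeries.coeff (m - Finsupp.single s 1) g else 0 := by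
  rw [X_def, coeff_monomial_mul]
  split_ifs <;> simp

lemma coeff_XX_mul (m : Fin 2 →₀ ℕ) (g : MvPowerSeries (Fin 2) K) :
    MvPowerSeries.coeff m (MvPowerSeries.X 0 * MvPowerSeries.X 1 * g) =
      if Finsupp.single (0 : Fin 2) 1 + Finsupp.single 1 1 ≤ m then
        MvPowerSeries.coeff (m - (Finsupp.single 0 1 + Finsupp.single 1 1)) g else 0 := by
  rw [X_def, X_def, monomial_mul_monomial, coeff_monomial_mul]
  split_ifs <;> simp

lemma coeff_fml_mul (m : Fin 2 →₀ ℕ) (g : MvPowerSeries (Fin 2) K) :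
    MvPowerSeries.coeff m (fml K * g) =
      (if Finsupp.single (0 : Fin 2) 1 ≤ m then
          MvPowerSeries.coeff (m - Finsupp.single 0 1) g else 0)
      + (if Finsupp.single (1 : Fin 2) 1 ≤ m then
          MvPowerSeries.coeff (m - Finsupp.single 1 1) g else 0)
      - (if Finsupp.single (0 : Fin 2) 1 + Finsupp.single 1 1 ≤ m then
          MvPowerSeries.coeff (m - (Finsupp.single 0 1 + Finsupp.single 1 1)) g else 0) := by
  rw [fml, sub_mul, add_mul, map_sub, map_add, coeff_X_mul', coeff_X_mul', coeff_XX_mul]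

lemma coeff_fml_pow_single (n j : ℕ) :
    MvPowerSeries.coeff (Finsupp.single 1 j) ((fml K) ^ n) = if n = j then 1 else 0 := by
  induction n generalizing j with
  | zero =>
    rw [pow_zero, coeff_one]
    simp [Finsupp.single_eq_zero, eq_comm]
  | succ n ih =>
    have h1 : ¬ (Finsupp.single (0 : Fin 2) 1 ≤ Finsupp.single 1 j) := by
      simp [Finsupp.le_def, Fin.forall_fin_two, Finsupp.single_apply]
    have h3 : ¬ (Finsupp.single (0:Fin 2) 1 + Finsupp.single 1 1 ≤ Finsupp.single (1:Fin 2) j) := by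
      simp [Finsupp.le_def, Fin.forall_fin_two, Finsupp.single_apply, Finsupp.add_apply]
    rw [pow_succ', coeff_fml_mul, if_neg h1, if_neg h3]
    cases j with
    | zero =>
      have h2 : ¬ (Finsupp.single (1 : Fin 2) 1 ≤ Finsupp.single 1 0) := by
        simp [Finsupp.le_def, Fin.forall_fin_two, Finsupp.single_apply]
      rw [if_neg h2]
      simp
    | succ k =>
      have h2 : Finsupp.single (1 : Fin 2) 1 ≤ Finsupp.single 1 (k+1) := by
        simp [Finsupp.le_def, Fin.forall_fin_two, Finsupp.single_apply]
      rw [if_pos h2,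
        show Finsupp.single (1 : Fin 2) (k+1) - Finsupp.single 1 1 = Finsupp.single 1 k by
          ext i; fin_cases i <;> simp [Finsupp.tsub_apply, Finsupp.single_apply],
        ih k]
      split_ifs <;> first | omega | ring

lemma coeff_fml_pow (n j : ℕ) :
    MvPowerSeries.coeff (Finsupp.single 0 1 + Finsupp.single 1 j) ((fml K) ^ n) =
      if n = j + 1 then (n : K) else if n = j then -(n : K) else 0 := by
  induction n generalizing j with
  | zero =>
    rw [pow_zero, coeff_one,
      if_neg (show ¬ (Finsupp.single (0:Fin 2) 1 + Finsupp.single 1 j = 0) by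
        simp [Finsupp.ext_iff, Fin.forall_fin_two, Finsupp.single_apply, Finsupp.add_apply])]
    simp
  | succ n ih =>
    have h1 : Finsupp.single (0:Fin 2) 1 ≤ Finsupp.single 0 1 + Finsupp.single 1 j := by
      simp [Finsupp.le_def, Fin.forall_fin_two, Finsupp.single_apply, Finsupp.add_apply]
    rw [pow_succ', coeff_fml_mul, if_pos h1, add_tsub_cancel_left, coeff_fml_pow_single]
    cases j with
    | zero =>
      have h2 : ¬ (Finsupp.single (1:Fin 2) 1 ≤ Finsupp.single 0 1 + Finsupp.single 1 0) := by
        simp [Finsupp.le_def, Fin.forall_fin_two, Finsupp.single_apply, Finsupp.add_apply]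
      have h3 : ¬ (Finsupp.single (0:Fin 2) 1 + Finsupp.single 1 1
          ≤ Finsupp.single 0 1 + Finsupp.single 1 0) := by
        simp [Finsupp.le_def, Fin.forall_fin_two, Finsupp.single_apply, Finsupp.add_apply]
      rw [if_neg h2, if_neg h3]
      split_ifs <;> (try omega) <;> (try (subst_vars; push_cast; ring)) <;> simp_all
    | succ k =>
      have h2 : Finsupp.single (1:Fin 2) 1 ≤ Finsupp.single 0 1 + Finsupp.single 1 (k+1) := by
        simp [Finsupp.le_def, Fin.forall_fin_two, Finsupp.single_apply, Finsupp.add_apply]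
      have h3 : Finsupp.single (0:Fin 2) 1 + Finsupp.single 1 1
          ≤ Finsupp.single 0 1 + Finsupp.single 1 (k+1) := by
        simp [Finsupp.le_def, Fin.forall_fin_two, Finsupp.single_apply, Finsupp.add_apply]
      rw [if_pos h2,
        show (Finsupp.single (0:Fin 2) 1 + Finsupp.single 1 (k+1)) - Finsupp.single 1 1
            = Finsupp.single 0 1 + Finsupp.single 1 k by
          ext i; fin_cases i <;> simp [Finsupp.tsub_apply, Finsupp.single_apply, Finsupp.add_apply],
        ih k, if_pos h3,
        show (Finsupp.single (0:Fin 2) 1 + Finsupp.single 1 (k+1))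
              - (Finsupp.single 0 1 + Finsupp.single 1 1) = Finsupp.single 1 k by
          ext i; fin_cases i <;> simp [Finsupp.tsub_apply, Finsupp.single_apply, Finsupp.add_apply],
        coeff_fml_pow_single]
      split_ifs <;> first | omega | (push_cast; ring)

lemma coeff_psubst (f : MvPowerSeries (Fin 2) K) (G : PowerSeries K) (d : Fin 2 →₀ ℕ) :
    MvPowerSeries.coeff d (psubst f G) =
      ∑ n ∈ Finset.range ((d.sum fun _ e => e) + 1),
        PowerSeries.coeff n G * MvPowerSeries.coeff d (f ^ n) :=
  rfl

lemma dsum (j : ℕ) :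
    ((Finsupp.single (0:Fin 2) 1 + Finsupp.single 1 j).sum fun _ e => e) = 1 + j := by
  rw [Finsupp.sum_add_index' (fun _ => rfl) (fun _ _ _ => rfl)]
  simp [Finsupp.sum_single_index]

lemma coeff_psubst_fml (G : PowerSeries K) (j : ℕ) :
    MvPowerSeries.coeff (Finsupp.single 0 1 + Finsupp.single 1 j) (psubst (fml K) G)
      = PowerSeries.coeff (j+1) G * ((j+1 : ℕ) : K)
        - PowerSeries.coeff j G * ((j : ℕ) : K) := by
  rw [coeff_psubst, dsum]
  have : ∀ n ∈ Finset.range (1 + j + 1),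
      PowerSeries.coeff n G * MvPowerSeries.coeff
          (Finsupp.single 0 1 + Finsupp.single 1 j) ((fml K) ^ n)
        = (if n = j+1 then PowerSeries.coeff n G * (n : K) else 0)
          + (if n = j then -(PowerSeries.coeff n G * (n : K)) else 0) := by
    intro n _
    rw [coeff_fml_pow]
    split_ifs <;> first | omega | ring
  rw [Finset.sum_congr rfl this, Finset.sum_add_distrib,
    Finset.sum_ite_eq' (Finset.range (1 + j + 1)),
    Finset.sum_ite_eq' (Finset.range (1 + j + 1)),
    if_pos (by simp only [Finset.mem_range]; omega),
    if_pos (by simp only [Finset.mem_range]; omega)]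
  ring

lemma coeff_psubst_X0 (G : PowerSeries K) (j : ℕ) (hj : 1 ≤ j) :
    MvPowerSeries.coeff (Finsupp.single 0 1 + Finsupp.single 1 j)
      (psubst (MvPowerSeries.X (0 : Fin 2)) G) = 0 := by
  rw [coeff_psubst (MvPowerSeries.X (0 : Fin 2)) G]
  refine Finset.sum_eq_zero fun n _ => ?_
  rw [coeff_X_pow, if_neg, mul_zero]
  intro h
  have := congrFun (congrArg (fun f : Fin 2 →₀ ℕ => (f : Fin 2 → ℕ)) h) 1
  simp [Finsupp.single_apply, Finsupp.add_apply] at this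
  omega

lemma coeff_psubst_X1 (G : PowerSeries K) (j : ℕ) :
    MvPowerSeries.coeff (Finsupp.single 0 1 + Finsupp.single 1 j)
      (psubst (MvPowerSeries.X (1 : Fin 2)) G) = 0 := by
  rw [coeff_psubst (MvPowerSeries.X (1 : Fin 2)) G]
  refine Finset.sum_eq_zero fun n _ => ?_
  rw [coeff_X_pow, if_neg, mul_zero]
  intro h
  have := congrFun (congrArg (fun f : Fin 2 →₀ ℕ => (f : Fin 2 → ℕ)) h) 0
  simp [Finsupp.single_apply, Finsupp.add_apply] at this

lemma coeff_deriv2 (G : PowerSeries K) (hG0 : PowerSeries.constantCoeff G = 0)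
    (j : ℕ) (hj : 1 ≤ j) :
    MvPowerSeries.coeff (Finsupp.single 0 1 + Finsupp.single 1 j) (deriv2 G)
      = PowerSeries.coeff (j+1) G * ((j+1 : ℕ) : K)
        - PowerSeries.coeff j G * ((j : ℕ) : K) := by
  have hd : deriv2 G = psubst (fml K) G - psubst (MvPowerSeries.X 0) G
      - psubst (MvPowerSeries.X 1) G
      + MvPowerSeries.C (σ := Fin 2) (R := K) (PowerSeries.constantCoeff G) := rfl
  rw [hd, hG0, map_zero, add_zero, map_sub, map_sub, coeff_psubst_fml,
    coeff_psubst_X0 G j hj, coeff_psubst_X1]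
  ring

end AuxFml

/-- Let `G(x) = ∑_{i≥1} aᵢ xⁱ ∈ Q̂[[x]]` be such that `∂G(x,y) = G(x+y-xy) - G(x) - G(y)`
has all coefficients in `Ẑ`.  Setting `bᵢ = i·aᵢ`, one has `bᵢ - b₁ ∈ Ẑ` for all `i ≥ 1`;
in particular if `a₁ ∈ Ẑ` then all `bᵢ ∈ Ẑ`. -/
theorem sub_linear_coeff_integral (G : PowerSeries QHat)
    (hG0 : PowerSeries.constantCoeff G = 0)
    (hint : ∀ d : Fin 2 →₀ ℕ, MvPowerSeries.coeff d (deriv2 G) ∈ Set.range toQHat) :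
    (∀ i : ℕ, 1 ≤ i →
        (i : QHat) * PowerSeries.coeff i G - PowerSeries.coeff 1 G
          ∈ Set.range toQHat) ∧
    (PowerSeries.coeff 1 G ∈ Set.range toQHat →
        ∀ i : ℕ, (i : QHat) * PowerSeries.coeff i G ∈ Set.range toQHat) := by
  have hzero : (0 : QHat) ∈ Set.range ⇑toQHat := ⟨0, map_zero _⟩
  have hadd : ∀ x y : QHat, x ∈ Set.range ⇑toQHat → y ∈ Set.range ⇑toQHat →
      x + y ∈ Set.range ⇑toQHat := by
    rintro _ _ ⟨a, rfl⟩ ⟨b, rfl⟩; exact ⟨a + b, toQHat.map_add a b⟩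
  have key : ∀ j : ℕ, 1 ≤ j →
      ((j+1 : ℕ) : QHat) * PowerSeries.coeff (j+1) G
        - ((j : ℕ) : QHat) * PowerSeries.coeff j G ∈ Set.range ⇑toQHat := by
    intro j hj
    have h := hint (Finsupp.single 0 1 + Finsupp.single 1 j)
    rw [coeff_deriv2 G hG0 j hj] at h
    have heq : ((j+1 : ℕ) : QHat) * PowerSeries.coeff (j+1) G
        - ((j : ℕ) : QHat) * PowerSeries.coeff j G
        = PowerSeries.coeff (j+1) G * ((j+1 : ℕ) : QHat)
          - PowerSeries.coeff j G * ((j : ℕ) : QHat) := by ring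
    rw [heq]
    exact h
  have part1 : ∀ i : ℕ, 1 ≤ i →
      (i : QHat) * PowerSeries.coeff i G - PowerSeries.coeff 1 G
        ∈ Set.range ⇑toQHat := by
    intro i hi
    induction i, hi using Nat.le_induction with
    | base => simp only [Nat.cast_one, one_mul, sub_self]; exact hzero
    | succ n hn ih =>
      have h2 := key n hn
      have heq : ((n+1 : ℕ) : QHat) * PowerSeries.coeff (n+1) G
            - PowerSeries.coeff 1 G
          = (((n+1 : ℕ) : QHat) * PowerSeries.coeff (n+1) G
              - ((n : ℕ) : QHat) * PowerSeries.coeff n G)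
            + (((n : ℕ) : QHat) * PowerSeries.coeff n G
              - PowerSeries.coeff 1 G) := by ring
      rw [heq]
      exact hadd _ _ h2 ih
  refine ⟨part1, fun h1 i => ?_⟩
  rcases Nat.eq_zero_or_pos i with h | h
  · subst h
    simpa using hzero
  · have h3 := hadd _ _ (part1 i h) h1
    simpa using h3
end

section
/- Suppose $R$ is a torsion-free commutative ring with no nontrivial $\mathbb{Z}$-divisible elements (i.e., no nonzero $r \in R$ is divisible by every positive integer), and let $K = R \otimes \mathbb{Q}$. Then for every $n \ge 1$, $x R[[x]] \cap \left(\sum_{0 < r < n} K \cdot \lg_r(x)\right) = 0$ inside $K[[x]]$, where $\lg_r(x) = \frac{1}{r!}(\log(1-x))^r$. -/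
open TensorProduct

variable (R : Type*) [CommRing R]

/-- The canonical map `R → K = R ⊗ ℚ`. -/
noncomputable def toK : R →+* ℚ ⊗[ℤ] R := Algebra.TensorProduct.includeRight.toRingHom

/-- The formal power series `log(1-x) = -∑_{i≥1} xⁱ/i` over `K = R ⊗ ℚ`. -/
noncomputable def logOneSub : PowerSeries (ℚ ⊗[ℤ] R) :=
  PowerSeries.mk fun i => if i = 0 then 0 else algebraMap ℚ (ℚ ⊗[ℤ] R) (-(1 / (i : ℚ)))

/-- `lg_r(x) = (1/r!) (log(1-x))^r` over `K = R ⊗ ℚ`. -/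
noncomputable def lg (r : ℕ) : PowerSeries (ℚ ⊗[ℤ] R) :=
  ((r.factorial : ℚ)⁻¹) • (logOneSub R) ^ r

open PowerSeries

local notation "K" => ℚ ⊗[ℤ] R

lemma coeff_deriv_logOneSub (n : ℕ) :
    coeff n (derivative K (logOneSub R)) = -1 := by
  rw [coeff_derivative, logOneSub, coeff_mk, if_neg (Nat.succ_ne_zero n)]
  have h2 : ((n : K) + 1) = algebraMap ℚ K ((n : ℚ) + 1) := by
    rw [map_add, map_natCast, map_one]
  rw [h2, ← map_mul]
  rw [show (-1 : K) = algebraMap ℚ K (-1) by rw [map_neg, map_one]]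
  congr 1
  have h : ((n : ℚ) + 1) ≠ 0 := by positivity
  push_cast
  field_simp

lemma X_sub_one_mul_deriv_logOneSub :
    (X - 1) * derivative K (logOneSub R) = 1 := by
  ext n
  rw [sub_mul, one_mul, map_sub]
  cases n with
  | zero =>
    rw [coeff_zero_X_mul, coeff_deriv_logOneSub, coeff_zero_one]
    ring
  | succ m =>
    rw [coeff_succ_X_mul, coeff_deriv_logOneSub, coeff_deriv_logOneSub, coeff_one,
      if_neg (Nat.succ_ne_zero m)]
    ring

lemma lg_zero : lg R 0 = 1 := by
  simp [lg]

lemma X_sub_one_mul_deriv_lg (r : ℕ) :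
    (X - 1) * derivative K (lg R (r + 1)) = lg R r := by
  have hq : ((r + 1).factorial : ℚ)⁻¹ • (derivative K ((logOneSub R) ^ (r + 1)))
      = derivative K (lg R (r + 1)) := by
    rw [lg, ← algebraMap_smul K (((r + 1).factorial : ℚ)⁻¹) ((logOneSub R) ^ (r + 1)),
      Derivation.map_smul, algebraMap_smul]
  rw [← hq, Derivation.leibniz_pow, Nat.add_sub_cancel, smul_eq_mul,
    mul_smul_comm, mul_smul_comm, mul_left_comm, X_sub_one_mul_deriv_logOneSub, mul_one,
    ← Nat.cast_smul_eq_nsmul ℚ, smul_smul, lg]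
  congr 1
  have h : ((r : ℚ) + 1) ≠ 0 := by positivity
  rw [Nat.factorial_succ]
  push_cast
  field_simp


lemma constantCoeff_lg (r : ℕ) (hr : 0 < r) : constantCoeff (lg R r) = 0 := by
  rw [lg, constantCoeff_smul, map_pow]
  have : constantCoeff (logOneSub R) = 0 := by
    rw [logOneSub, ← coeff_zero_eq_constantCoeff, coeff_mk, if_pos rfl]
  rw [this, zero_pow hr.ne', smul_zero]

lemma constantCoeff_of_mem_span (m : ℕ) (F : PowerSeries K)
    (hF : F ∈ Submodule.span K (lg R '' Set.Ioo 0 m)) : constantCoeff F = 0 := by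
  induction hF using Submodule.span_induction with
  | mem x hx =>
    obtain ⟨r, ⟨hr, _⟩, rfl⟩ := hx
    exact constantCoeff_lg R r hr
  | zero => simp
  | add x y _ _ hx hy => rw [map_add, hx, hy, add_zero]
  | smul a x _ hx => rw [constantCoeff_smul, hx, smul_zero]

lemma phi_mem_span (m : ℕ) (F : PowerSeries K)
    (hF : F ∈ Submodule.span K (lg R '' Set.Ioo 0 (m + 1))) :
    (X - 1) * derivative K F ∈
      Submodule.span K (insert 1 (lg R '' Set.Ioo 0 m)) := by
  induction hF using Submodule.span_induction with
  | mem x hx =>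
    obtain ⟨r, ⟨hr, hrm⟩, rfl⟩ := hx
    obtain ⟨k, rfl⟩ := Nat.exists_eq_add_of_lt hr  -- r = 0 + k + 1
    rw [zero_add] at *
    rw [X_sub_one_mul_deriv_lg]
    apply Submodule.subset_span
    rcases Nat.eq_zero_or_pos k with hk | hk
    · subst hk; rw [lg_zero]; exact Set.mem_insert _ _
    · exact Set.mem_insert_of_mem _ ⟨k, ⟨hk, by omega⟩, rfl⟩
  | zero => simp
  | add x y _ _ hx hy =>
    rw [map_add, mul_add]; exact Submodule.add_mem _ hx hy
  | smul a x _ hx =>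
    rw [Derivation.map_smul, smul_eq_C_mul, mul_left_comm, ← smul_eq_C_mul]; exact Submodule.smul_mem _ a hx

lemma map_derivative {A S : Type*} [CommRing A] [CommRing S] (f : A →+* S)
    (F : PowerSeries A) :
    PowerSeries.map f (derivative A F) = derivative S (PowerSeries.map f F) := by
  ext n
  simp only [coeff_map, coeff_derivative, coeff_map, map_mul, map_natCast, map_add, map_one]

lemma toK_injective (htf : ∀ (k : ℤ), k ≠ 0 → ∀ r : R, k • r = 0 → r = 0) :
    Function.Injective (toK R) := by
  have hloc : IsLocalizedModule (nonZeroDivisors ℤ) (TensorProduct.mk ℤ ℚ R 1) :=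
    (isLocalizedModule_iff_isBaseChange (nonZeroDivisors ℤ) ℚ _).2
      (TensorProduct.isBaseChange (R := ℤ) (M := R) (S := ℚ))
  rw [injective_iff_map_eq_zero]
  intro r hr
  have h0 : (TensorProduct.mk ℤ ℚ R 1) r = 0 := hr
  obtain ⟨s, hs⟩ := (IsLocalizedModule.eq_zero_iff (nonZeroDivisors ℤ) _).1 h0
  exact htf s (nonZeroDivisors.coe_ne_zero s) r hs

lemma map_toK_G₁ (G : PowerSeries R) (b : R) :
    PowerSeries.map (toK R) ((X - 1) * derivative R G + C b)
      = (X - 1) * derivative K (PowerSeries.map (toK R) G) + C (toK R b) := by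
  rw [map_add, map_mul, map_sub, PowerSeries.map_X, map_one,
    PowerSeries.map_C, map_derivative]

/-- If `R` is torsion-free with no nontrivial `ℤ`-divisible elements and `K = R ⊗ ℚ`, then
`x·R[[x]] ∩ (∑_{0<r<n} K·lg_r(x)) = 0` inside `K[[x]]`, for every `n ≥ 1`. -/
theorem inter_span_lg_eq_zero
    (htf : ∀ (k : ℤ), k ≠ 0 → ∀ r : R, k • r = 0 → r = 0)
    (hdiv : ∀ r : R, (∀ k : ℕ, 0 < k → ∃ s : R, r = k • s) → r = 0)
    (n : ℕ) (hn : 1 ≤ n) (G : PowerSeries R)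
    (hG0 : PowerSeries.constantCoeff G = 0)
    (hmem : PowerSeries.map (toK R) G
      ∈ Submodule.span (ℚ ⊗[ℤ] R) (lg R '' Set.Ioo 0 n)) :
    PowerSeries.map (toK R) G = 0 := by
  induction n generalizing G with
  | zero => omega
  | succ m ih =>
    rcases Nat.eq_zero_or_pos m with hm | hm
    · subst hm
      have he : Set.Ioo (0:ℕ) 1 = (∅ : Set ℕ) := by
        ext x; simp; omega
      rw [he, Set.image_empty, Submodule.span_empty, Submodule.mem_bot] at hmem
      exact hmem
    · set b : R := PowerSeries.coeff 1 G with hb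
      set G₁ : PowerSeries R := (X - 1) * derivative R G + C b with hG₁def
      have hG₁0 : constantCoeff G₁ = 0 := by
        rw [hG₁def, map_add, map_mul, map_sub, constantCoeff_X, constantCoeff_one,
          constantCoeff_C, ← coeff_zero_eq_constantCoeff_apply, coeff_derivative, hb]
        push_cast
        ring
      have hΦ := phi_mem_span R m _ hmem
      obtain ⟨a, z, hz, hEq⟩ := Submodule.mem_span_insert.1 hΦ
      have hcz : constantCoeff z = 0 := constantCoeff_of_mem_span R m z hz
      have hΦc : constantCoeff ((X - 1) * derivative K (PowerSeries.map (toK R) G))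
          = -(toK R b) := by
        rw [map_mul, map_sub, constantCoeff_X, constantCoeff_one,
          ← coeff_zero_eq_constantCoeff_apply, coeff_derivative, coeff_map, ← hb]
        push_cast
        ring
      have ha : a = -(toK R b) := by
        rw [hEq, map_add, hcz, add_zero, constantCoeff_smul, map_one,
          smul_eq_mul, mul_one] at hΦc
        exact hΦc
      have hmem1 : PowerSeries.map (toK R) G₁
          ∈ Submodule.span K (lg R '' Set.Ioo 0 m) := by
        rw [hG₁def, map_toK_G₁, hEq, ha]
        have h1 : (-(toK R b)) • (1 : PowerSeries K) = C (-(toK R b)) := by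
          rw [smul_eq_C_mul, mul_one]
        rw [h1, map_neg]
        convert hz using 1
        ring
      have hz0 : PowerSeries.map (toK R) G₁ = 0 := ih hm G₁ hG₁0 hmem1
      -- (X-1) * D(map G) = C(-(toK b))
      have hkey : (X - 1) * derivative K (PowerSeries.map (toK R) G)
          = C (-(toK R b)) := by
        rw [hG₁def, map_toK_G₁] at hz0
        rw [map_neg]
        exact eq_neg_of_add_eq_zero_left hz0
      have hcoe : ∀ i : ℕ, coeff i (derivative K (PowerSeries.map (toK R) G))
          = toK R b := by
        intro i
        induction i with
        | zero =>
          have h0 := congrArg (coeff 0) hkey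
          rw [sub_mul, one_mul, map_sub, coeff_zero_X_mul, coeff_zero_C, zero_sub,
            neg_eq_iff_eq_neg] at h0
          rw [h0]; ring
        | succ j hj =>
          have h0 := congrArg (coeff (j + 1)) hkey
          rw [sub_mul, one_mul, map_sub, coeff_succ_X_mul, coeff_C,
            if_neg (Nat.succ_ne_zero j), sub_eq_zero] at h0
          rw [← h0, hj]
      have hR : ∀ i : ℕ, PowerSeries.coeff (i + 1) G * (i + 1) = b := by
        intro i
        apply toK_injective R htf
        have := hcoe i
        rw [coeff_derivative, coeff_map] at this
        rw [map_mul, map_add, map_natCast, map_one]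
        exact this
      have hb0 : b = 0 := by
        apply hdiv
        intro k hk
        obtain ⟨i, rfl⟩ := Nat.exists_eq_add_of_lt hk
        refine ⟨PowerSeries.coeff (0 + i + 1) G, ?_⟩
        have hsym := (hR (0 + i)).symm
        rw [nsmul_eq_mul, mul_comm]
        exact_mod_cast hsym
      have hcoeffs : ∀ i : ℕ, PowerSeries.coeff (i + 1) G = 0 := by
        intro i
        have h1 : PowerSeries.coeff (i + 1) G * (i + 1) = 0 := by rw [hR i, hb0]
        refine htf ((i : ℤ) + 1) (by omega) _ ?_
        rw [zsmul_eq_mul, mul_comm]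
        push_cast
        exact h1
      have hGz : G = 0 := by
        ext j
        cases j with
        | zero => rw [coeff_zero_eq_constantCoeff_apply, hG0, map_zero]
        | succ i => rw [hcoeffs i, map_zero]
      rw [hGz, map_zero]
end
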